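/- Let W be a finite simply laced Weyl group of connected type. For any two nodes i, j of the Dynkin diagram, there is a unique element w_{ji} of minimal length in W such that w_{ji} r_j w_{ji}^{-1} = r_i, and it satisfies w_{ij}^{-1} = w_{ji}. -/

import Mathlib

noncomputable section
open scoped RealInnerProductSpace

namespace WeylDev

abbrev Vd (d : ℕ) := EuclideanSpace ℝ (Fin d)
abbrev Ed (d : ℕ) := Vd d ≃ₗ[ℝ] Vd d

variable {d : ℕ} {ι : Type*}

theorem Emul_apply (f g : Ed d) (v : Vd d) : (f * g) v = f (g v) := rfl
theorem Eone_apply (v : Vd d) : (1 : Ed d) v = v := rfl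
theorem Einv_apply (w : Ed d) (v : Vd d) : w⁻¹ v = w.symm v := rfl
theorem Eapply_inv_apply (w : Ed d) (v : Vd d) : w (w⁻¹ v) = v := w.apply_symm_apply v

/-- word product -/
def wprod (g : ι → Ed d) (L : List ι) : Ed d := (L.map g).prod

/-- length function -/
def lenG (g : ι → Ed d) (w : Ed d) : ℕ := sInf {m | ∃ L : List ι, L.length = m ∧ w = wprod g L}

def GG (g : ι → Ed d) : Subgroup (Ed d) := Subgroup.closure (Set.range g)

/-- cone of nonneg combinations -/
def InCone [Fintype ι] (β : ι → Vd d) (v : Vd d) : Prop :=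
  ∃ c : ι → ℝ, (∀ k, 0 ≤ c k) ∧ v = ∑ k, c k • β k

/-- positivity -/
def Pos [Fintype ι] (β : ι → Vd d) (v : Vd d) : Prop := v ≠ 0 ∧ InCone β v

def IsRoot (β : ι → Vd d) (g : ι → Ed d) (v : Vd d) : Prop := ∃ w ∈ GG g, ∃ k, v = w (β k)

variable {β : ι → Vd d} {g : ι → Ed d}

theorem wprod_nil : wprod g [] = 1 := rfl

theorem wprod_cons (a : ι) (L : List ι) : wprod g (a :: L) = g a * wprod g L := by
  simp [wprod]

theorem wprod_append (L L' : List ι) : wprod g (L ++ L') = wprod g L * wprod g L' := by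
  simp [wprod]

theorem wprod_mem (L : List ι) : wprod g L ∈ GG g := by
  induction L with
  | nil => exact one_mem _
  | cons a L ih =>
    rw [wprod_cons]
    exact mul_mem (Subgroup.subset_closure ⟨a, rfl⟩) ih

theorem g_mem (k : ι) : g k ∈ GG g := Subgroup.subset_closure ⟨k, rfl⟩

section basic

variable (hg : ∀ k v, g k v = v - ⟪β k, v⟫ • β k)
  (hnorm : ∀ k, ⟪β k, β k⟫ = 2)

include hg hnorm

theorem g_sq (k : ι) : g k * g k = 1 := by
  refine LinearEquiv.ext fun v => ?_
  rw [Emul_apply, Eone_apply, hg k (g k v), hg k v, inner_sub_right, inner_smul_right, hnorm]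
  module

theorem g_inv (k : ι) : (g k)⁻¹ = g k :=
  inv_eq_of_mul_eq_one_left (g_sq hg hnorm k)

theorem g_self (k : ι) : g k (β k) = - β k := by
  rw [hg k, hnorm]
  module

theorem mul_g_g (u : Ed d) (k : ι) : u * g k * g k = u := by
  rw [mul_assoc, g_sq hg hnorm, mul_one]

theorem wprod_inv (L : List ι) : (wprod g L)⁻¹ = wprod g L.reverse := by
  induction L with
  | nil => simp [wprod]
  | cons a L ih =>
    rw [wprod_cons, mul_inv_rev, ih, List.reverse_cons, wprod_append, g_inv hg hnorm]
    simp [wprod]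

theorem word_of_mem {w : Ed d} (hw : w ∈ GG g) : ∃ L : List ι, w = wprod g L := by
  induction hw using Subgroup.closure_induction with
  | mem x hx =>
    obtain ⟨k, rfl⟩ := hx
    exact ⟨[k], by simp [wprod]⟩
  | one => exact ⟨[], rfl⟩
  | mul x y hx hy ihx ihy =>
    obtain ⟨L1, rfl⟩ := ihx; obtain ⟨L2, rfl⟩ := ihy
    exact ⟨L1 ++ L2, (wprod_append L1 L2).symm⟩
  | inv x hx ih =>
    obtain ⟨L, rfl⟩ := ih
    exact ⟨L.reverse, wprod_inv hg hnorm L⟩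

theorem orth {w : Ed d} (hw : w ∈ GG g) : ∀ u v : Vd d, ⟪w u, w v⟫ = ⟪u, v⟫ := by
  induction hw using Subgroup.closure_induction with
  | mem x hx =>
    obtain ⟨k, rfl⟩ := hx
    intro u v
    rw [hg k u, hg k v]
    simp only [inner_sub_left, inner_sub_right, inner_smul_left, inner_smul_right,
      hnorm, RCLike.star_def, conj_trivial]
    rw [real_inner_comm u (β k)]
    ring
  | one => intro u v; rfl
  | mul x y hx hy ihx ihy => intro u v; rw [Emul_apply, Emul_apply, ihx, ihy]
  | inv x hx ih =>
    intro u v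
    have h := ih (x⁻¹ u) (x⁻¹ v)
    rw [Eapply_inv_apply, Eapply_inv_apply] at h
    exact h.symm

theorem conj_formula {w : Ed d} (hw : w ∈ GG g) {f : Ed d} {γ : Vd d}
    (hf : ∀ v, f v = v - ⟪γ, v⟫ • γ) :
    ∀ v, (w * f * w⁻¹) v = v - ⟪w γ, v⟫ • w γ := by
  intro v
  have key : (⟪w γ, v⟫ : ℝ) = ⟪γ, w⁻¹ v⟫ := by
    conv_lhs => rw [← Eapply_inv_apply w v]
    exact orth hg hnorm hw γ (w⁻¹ v)
  rw [Emul_apply, Emul_apply, hf, map_sub, map_smul, Eapply_inv_apply, key]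

end basic

section len

theorem lenG_le {w : Ed d} {L : List ι} (h : w = wprod g L) : lenG g w ≤ L.length :=
  Nat.sInf_le ⟨L, rfl, h⟩

theorem lenG_spec {w : Ed d} (hw : ∃ L : List ι, w = wprod g L) :
    ∃ L : List ι, L.length = lenG g w ∧ w = wprod g L := by
  have : {m | ∃ L : List ι, L.length = m ∧ w = wprod g L}.Nonempty := by
    obtain ⟨L, hL⟩ := hw; exact ⟨L.length, L, rfl, hL⟩
  exact Nat.sInf_mem this

theorem lenG_one : lenG (d := d) g 1 = 0 :=
  Nat.le_zero.mp (lenG_le (L := []) rfl)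

theorem eq_one_of_lenG_eq_zero {w : Ed d} (hw : ∃ L : List ι, w = wprod g L)
    (h : lenG g w = 0) : w = 1 := by
  obtain ⟨L, hL, hw2⟩ := lenG_spec hw
  rw [h, List.length_eq_zero_iff] at hL
  subst hL; exact hw2

theorem lenG_mul_le (L : List ι) {u : Ed d} (hu : ∃ L' : List ι, u = wprod g L') :
    lenG g (u * wprod g L) ≤ lenG g u + L.length := by
  obtain ⟨L', hL', hu2⟩ := lenG_spec hu
  have h : u * wprod g L = wprod g (L' ++ L) := by rw [wprod_append, hu2]
  calc lenG g (u * wprod g L) ≤ (L' ++ L).length := lenG_le h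
  _ = lenG g u + L.length := by simp [hL']

variable (hg : ∀ k v, g k v = v - ⟪β k, v⟫ • β k) (hnorm : ∀ k, ⟪β k, β k⟫ = 2)
include hg hnorm

theorem lenG_inv {w : Ed d} (hw : w ∈ GG g) : lenG g w⁻¹ = lenG g w := by
  have key : ∀ u : Ed d, u ∈ GG g → lenG g u⁻¹ ≤ lenG g u := by
    intro u hu
    obtain ⟨L, hL, hu2⟩ := lenG_spec (word_of_mem hg hnorm hu)
    have : u⁻¹ = wprod g L.reverse := by rw [hu2, wprod_inv hg hnorm]
    calc lenG g u⁻¹ ≤ L.reverse.length := lenG_le this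
    _ = lenG g u := by simp [hL]
  have h1 := key w hw
  have h2 := key w⁻¹ (inv_mem hw)
  rw [inv_inv] at h2
  omega

theorem lenG_descent {w : Ed d} (hw : w ∈ GG g) (hne : lenG g w ≠ 0) :
    ∃ t : ι, lenG g (w * g t) + 1 = lenG g w := by
  obtain ⟨L, hL, hw2⟩ := lenG_spec (word_of_mem hg hnorm hw)
  rcases List.eq_nil_or_concat L with rfl | ⟨L', t, rfl⟩
  · simp at hL; omega
  · rw [List.concat_eq_append] at hL hw2
    refine ⟨t, ?_⟩
    have h1 : w * g t = wprod g L' := by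
      rw [hw2, wprod_append]
      simp only [wprod, List.map_cons, List.prod_cons, List.map_nil, List.prod_nil, mul_one]
      rw [mul_g_g hg hnorm]
    have h2 : lenG g (w * g t) ≤ L'.length := lenG_le h1
    have h3 : L'.length + 1 = lenG g w := by
      rw [← hL]; simp
    -- also w = (w * g t) * g t so lenG w ≤ lenG (w * g t) + 1
    have h4 : w = (w * g t) * g t := by rw [mul_g_g hg hnorm]
    have h5 : lenG g w ≤ lenG g (w * g t) + 1 := by
      have : (w * g t) * g t = (w * g t) * wprod g [t] := by
        simp [wprod]
      calc lenG g w = lenG g ((w * g t) * wprod g [t]) := by rw [← this, ← h4]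
      _ ≤ lenG g (w * g t) + 1 :=
          lenG_mul_le [t] (word_of_mem hg hnorm (by rw [h1]; exact wprod_mem L'))
    omega

end len

set_option linter.unusedSectionVars false

section pos

variable [Fintype ι] [DecidableEq ι]

theorem cone_add {u v : Vd d} (hu : InCone β u) (hv : InCone β v) : InCone β (u + v) := by
  obtain ⟨c, hc, rfl⟩ := hu; obtain ⟨c', hc', rfl⟩ := hv
  refine ⟨c + c', fun k => add_nonneg (hc k) (hc' k), ?_⟩
  rw [← Finset.sum_add_distrib]
  exact Finset.sum_congr rfl fun k _ => by simp [add_smul]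

theorem cone_smul {a : ℝ} (ha : 0 ≤ a) {v : Vd d} (hv : InCone β v) : InCone β (a • v) := by
  obtain ⟨c, hc, rfl⟩ := hv
  exact ⟨a • c, fun k => mul_nonneg ha (hc k), by rw [Finset.smul_sum]; simp [smul_smul]⟩

theorem cone_zero : InCone β 0 := ⟨0, fun _ => le_rfl, by simp⟩

theorem cone_beta (k : ι) : InCone β (β k) := by
  refine ⟨fun m => if m = k then 1 else 0, fun m => ?_, ?_⟩
  · by_cases h : m = k <;> simp [h]
  · simp [ite_smul]

theorem cone_sum {κ : Type*} (s : Finset κ) (c : κ → ℝ) (u : κ → Vd d)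
    (hc : ∀ m ∈ s, 0 ≤ c m) (hu : ∀ m ∈ s, InCone β (u m)) :
    InCone β (∑ m ∈ s, c m • u m) := by
  classical
  induction s using Finset.induction_on with
  | empty => simpa using cone_zero
  | insert _ _ hx ih =>
    rw [Finset.sum_insert hx]
    exact cone_add (cone_smul (hc _ (Finset.mem_insert_self _ _)) (hu _ (Finset.mem_insert_self _ _)))
      (ih (fun m hm => hc m (Finset.mem_insert_of_mem hm)) (fun m hm => hu m (Finset.mem_insert_of_mem hm)))

variable (hind : LinearIndependent ℝ β)
include hind

theorem repr_unique {c c' : ι → ℝ} (h : ∑ k, c k • β k = ∑ k, c' k • β k) : c = c' := by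
  have : ∑ k, (c k - c' k) • β k = 0 := by
    simp only [sub_smul, Finset.sum_sub_distrib, h, sub_self]
  funext k
  have := Fintype.linearIndependent_iff.mp hind _ this k
  linarith

theorem pos_neg_absurd {v : Vd d} (h1 : Pos β v) (h2 : Pos β (-v)) : False := by
  obtain ⟨hne, c, hc, hv⟩ := h1
  obtain ⟨_, c', hc', hv'⟩ := h2
  have hsum : ∑ k, (c + c') k • β k = ∑ k, (0 : ι → ℝ) k • β k := by
    have h0 : (∑ k, c k • β k) + (∑ k, c' k • β k) = 0 := by rw [← hv, ← hv']; simp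
    rw [← Finset.sum_add_distrib] at h0
    simp only [Pi.zero_apply, zero_smul, Finset.sum_const_zero]
    rw [← h0]
    exact Finset.sum_congr rfl fun k _ => by simp [add_smul]
  have hcc := repr_unique hind hsum
  apply hne
  rw [hv]
  have hz : ∀ k, c k = 0 := by
    intro k
    have h1 := hc k
    have h2 := hc' k
    have h3 := congrFun hcc k
    simp only [Pi.add_apply, Pi.zero_apply] at h3
    linarith
  rw [Finset.sum_congr rfl fun k _ => by rw [hz k, zero_smul]]
  simp

theorem pos_add_cone {u v : Vd d} (hu : Pos β u) (hv : InCone β v) : Pos β (u + v) := by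
  refine ⟨?_, cone_add hu.2 hv⟩
  intro h0
  obtain ⟨hne, c, hc, hu2⟩ := hu
  obtain ⟨c', hc', hv2⟩ := hv
  have : ∑ k, (c + c') k • β k = ∑ k, (0 : ι → ℝ) k • β k := by
    simp only [Pi.add_apply, add_smul, Finset.sum_add_distrib, ← hu2, ← hv2, h0]
    simp
  have hcc := repr_unique hind this
  apply hne
  rw [hu2]
  have : ∀ k, c k = 0 := by
    intro k
    have := congrFun hcc k
    simp only [Pi.add_apply, Pi.zero_apply] at this
    have := hc k; have := hc' k
    linarith
  simp [this]

theorem pos_add {u v : Vd d} (hu : Pos β u) (hv : Pos β v) : Pos β (u + v) :=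
  pos_add_cone hind hu hv.2

omit hind in
theorem pos_smul {a : ℝ} (ha : 0 < a) {v : Vd d} (hv : Pos β v) : Pos β (a • v) :=
  ⟨smul_ne_zero (ne_of_gt ha) hv.1, cone_smul ha.le hv.2⟩

end pos

section braid

variable (hg : ∀ k v, g k v = v - ⟪β k, v⟫ • β k)
  (hnorm : ∀ k, ⟪β k, β k⟫ = 2)

include hg hnorm

theorem braid2 (a b : ι) (hp : ⟪β a, β b⟫ = 0) : g a * g b = g b * g a := by
  have hp' : ⟪β b, β a⟫ = 0 := by rw [real_inner_comm]; exact hp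
  refine LinearEquiv.ext fun v => ?_
  rw [Emul_apply, Emul_apply, hg, hg, hg, hg]
  simp only [inner_sub_right, inner_smul_right, hp, hp', hnorm]
  module

theorem braid3 (a b : ι) (hp : ⟪β a, β b⟫ = -1) : g a * g b * g a = g b * g a * g b := by
  have hp' : ⟪β b, β a⟫ = -1 := by rw [real_inner_comm]; exact hp
  refine LinearEquiv.ext fun v => ?_
  rw [Emul_apply, Emul_apply, Emul_apply, Emul_apply]
  rw [hg, hg, hg, hg, hg, hg]
  simp only [inner_sub_right, inner_smul_right, hp, hp', hnorm]
  module

end braid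

section canon

/-- words in two letters -/
def wB (g : ι → Ed d) (a b : ι) (L : List Bool) : Ed d :=
  wprod g (L.map fun x => if x then a else b)

theorem wB_append (a b : ι) (L L' : List Bool) :
    wB g a b (L ++ L') = wB g a b L * wB g a b L' := by
  rw [wB, List.map_append, wprod_append]; rfl

theorem wB_true (a b : ι) : wB g a b [true] = g a := by simp [wB, wprod]

theorem wB_false (a b : ι) : wB g a b [false] = g b := by simp [wB, wprod]

theorem wB_nil (a b : ι) : wB g a b [] = 1 := rfl

theorem lenG_mul_wB_le (a b : ι) (C : List Bool) {u : Ed d} (hu : u ∈ GG g)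
    (hg : ∀ k v, g k v = v - ⟪β k, v⟫ • β k) (hnorm : ∀ k, ⟪β k, β k⟫ = 2) :
    lenG g (u * wB g a b C) ≤ lenG g u + C.length := by
  have := lenG_mul_le (C.map fun x => if x then a else b) (word_of_mem hg hnorm hu)
  simpa [wB] using this

variable (hg : ∀ k v, g k v = v - ⟪β k, v⟫ • β k)
  (hnorm : ∀ k, ⟪β k, β k⟫ = 2)

include hg hnorm

theorem canon2 (a b : ι) (hp : ⟪β a, β b⟫ = 0) (L : List Bool) :
    ∃ C : List Bool, wB g a b C = wB g a b L ∧ C.length ≤ L.length ∧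
      C ∈ [([] : List Bool), [true], [false], [true, false]] := by
  induction L using List.reverseRecOn with
  | nil => exact ⟨[], rfl, le_rfl, by simp⟩
  | append_singleton L x IH =>
    obtain ⟨C, hCeq, hClen, hCmem⟩ := IH
    have hstep : wB g a b (L ++ [x]) = wB g a b C * wB g a b [x] := by
      rw [wB_append, hCeq]
    have hlen : C.length + 1 ≤ (L ++ [x]).length := by
      simp only [List.length_append, List.length_cons, List.length_nil]
      omega
    simp only [List.mem_cons, List.not_mem_nil, or_false] at hCmem
    have hcomm := braid2 hg hnorm a b hp
    rcases hCmem with rfl | rfl | rfl | rfl <;> cases x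
    -- C = [], x = false
    · exact ⟨[false], by rw [hstep, wB_nil, one_mul], by simpa using hlen, by simp⟩
    · exact ⟨[true], by rw [hstep, wB_nil, one_mul], by simpa using hlen, by simp⟩
    -- C = [true]
    · exact ⟨[true, false], by rw [hstep]; simp [wB, wprod], by simpa using hlen, by simp⟩
    · refine ⟨[], ?_, by simp, by simp⟩
      rw [hstep, wB_true, g_sq hg hnorm, wB_nil]
    -- C = [false]
    · refine ⟨[], ?_, by simp, by simp⟩
      rw [hstep, wB_false, g_sq hg hnorm, wB_nil]
    · refine ⟨[true, false], ?_, by simpa using hlen, by simp⟩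
      rw [hstep, wB_false, wB_true]
      have : wB g a b [true, false] = g a * g b := by simp [wB, wprod]
      rw [this, ← hcomm]
    -- C = [true, false]
    · refine ⟨[true], ?_, by simp only [List.length_append, List.length_cons, List.length_nil] at hlen ⊢; omega, by simp⟩
      rw [hstep, wB_false, wB_true]
      have h1 : wB g a b [true, false] = g a * g b := by simp [wB, wprod]
      rw [h1, mul_g_g hg hnorm]
    · refine ⟨[false], ?_, by simp only [List.length_append, List.length_cons, List.length_nil] at hlen ⊢; omega, by simp⟩
      rw [hstep, wB_true, wB_false]
      have h1 : wB g a b [true, false] = g a * g b := by simp [wB, wprod]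
      rw [h1, hcomm, mul_g_g hg hnorm]

theorem canon3 (a b : ι) (hp : ⟪β a, β b⟫ = -1) (L : List Bool) :
    ∃ C : List Bool, wB g a b C = wB g a b L ∧ C.length ≤ L.length ∧
      C ∈ [([] : List Bool), [true], [false], [true, false], [false, true], [true, false, true]] := by
  induction L using List.reverseRecOn with
  | nil => exact ⟨[], rfl, le_rfl, by simp⟩
  | append_singleton L x IH =>
    obtain ⟨C, hCeq, hClen, hCmem⟩ := IH
    have hstep : wB g a b (L ++ [x]) = wB g a b C * wB g a b [x] := by
      rw [wB_append, hCeq]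
    have hlen : C.length + 1 ≤ (L ++ [x]).length := by
      simp only [List.length_append, List.length_cons, List.length_nil]
      omega
    simp only [List.mem_cons, List.not_mem_nil, or_false] at hCmem
    have hbraid := braid3 hg hnorm a b hp
    have hab : wB g a b [true, false] = g a * g b := by simp [wB, wprod]
    have hba : wB g a b [false, true] = g b * g a := by simp [wB, wprod]
    have haba : wB g a b [true, false, true] = g a * g b * g a := by
      simp [wB, wprod, mul_assoc]
    rcases hCmem with rfl | rfl | rfl | rfl | rfl | rfl <;> cases x
    -- C = []
    · exact ⟨[false], by rw [hstep, wB_nil, one_mul], by simpa using hlen, by simp⟩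
    · exact ⟨[true], by rw [hstep, wB_nil, one_mul], by simpa using hlen, by simp⟩
    -- C = [true]
    · refine ⟨[true, false], ?_, by simpa using hlen, by simp⟩
      rw [hstep, wB_true, wB_false, hab]
    · refine ⟨[], ?_, by simp, by simp⟩
      rw [hstep, wB_true, g_sq hg hnorm, wB_nil]
    -- C = [false]
    · refine ⟨[], ?_, by simp, by simp⟩
      rw [hstep, wB_false, g_sq hg hnorm, wB_nil]
    · refine ⟨[false, true], ?_, by simpa using hlen, by simp⟩
      rw [hstep, wB_false, wB_true, hba]
    -- C = [true, false]
    · refine ⟨[true], ?_, by simp only [List.length_append, List.length_cons, List.length_nil] at hlen ⊢; omega, by simp⟩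
      rw [hstep, wB_false, wB_true, hab, mul_g_g hg hnorm]
    · refine ⟨[true, false, true], ?_, by simpa using hlen, by simp⟩
      rw [hstep, wB_true, hab, haba]
    -- C = [false, true]
    · refine ⟨[true, false, true], ?_, by simpa using hlen, by simp⟩
      rw [hstep, wB_false, hba, haba, hbraid]
    · refine ⟨[false], ?_, by simp only [List.length_append, List.length_cons, List.length_nil] at hlen ⊢; omega, by simp⟩
      rw [hstep, wB_true, hba, mul_g_g hg hnorm, wB_false]
    -- C = [true, false, true]
    · refine ⟨[false, true], ?_, by simp only [List.length_append, List.length_cons, List.length_nil] at hlen ⊢; omega, by simp⟩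
      rw [hstep, wB_false, haba, hba]
      rw [hbraid, mul_g_g hg hnorm]
    · refine ⟨[true, false], ?_, by simp only [List.length_append, List.length_cons, List.length_nil] at hlen ⊢; omega, by simp⟩
      rw [hstep, wB_true, haba, hab, mul_g_g hg hnorm]

end canon

section descent

variable (hg : ∀ k v, g k v = v - ⟪β k, v⟫ • β k)
  (hnorm : ∀ k, ⟪β k, β k⟫ = 2)

include hg hnorm

theorem lenG_mul_g_le {u : Ed d} (hu : u ∈ GG g) (k : ι) :
    lenG g (u * g k) ≤ lenG g u + 1 := by
  have h1 : u * g k = u * wprod g [k] := by simp [wprod]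
  rw [h1]
  exact lenG_mul_le [k] (word_of_mem hg hnorm hu)

theorem descent (a b : ι) : ∀ m : ℕ, ∀ w ∈ GG g, lenG g w = m →
    ∃ y ∈ GG g, ∃ L : List Bool, w = y * wB g a b L ∧ lenG g w = lenG g y + L.length ∧
      lenG g y ≤ lenG g (y * g a) ∧ lenG g y ≤ lenG g (y * g b) := by
  intro m
  induction m using Nat.strong_induction_on with
  | _ m IH =>
    intro w hw hlen
    by_cases ha : lenG g (w * g a) < lenG g w
    · have hwa : w * g a ∈ GG g := mul_mem hw (g_mem a)
      obtain ⟨y, hy, L, hP, hQ, hA, hB⟩ :=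
        IH (lenG g (w * g a)) (by omega) (w * g a) hwa rfl
      refine ⟨y, hy, L ++ [true], ?_, ?_, hA, hB⟩
      · rw [wB_append, wB_true, ← mul_assoc, ← hP, mul_g_g hg hnorm]
      · have h1 : lenG g w ≤ lenG g (w * g a) + 1 := by
          conv_lhs => rw [← mul_g_g hg hnorm w a]
          exact lenG_mul_g_le hg hnorm hwa a
        simp only [List.length_append, List.length_cons, List.length_nil]
        omega
    · by_cases hb : lenG g (w * g b) < lenG g w
      · have hwb : w * g b ∈ GG g := mul_mem hw (g_mem b)
        obtain ⟨y, hy, L, hP, hQ, hA, hB⟩ :=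
          IH (lenG g (w * g b)) (by omega) (w * g b) hwb rfl
        refine ⟨y, hy, L ++ [false], ?_, ?_, hA, hB⟩
        · rw [wB_append, wB_false, ← mul_assoc, ← hP, mul_g_g hg hnorm]
        · have h1 : lenG g w ≤ lenG g (w * g b) + 1 := by
            conv_lhs => rw [← mul_g_g hg hnorm w b]
            exact lenG_mul_g_le hg hnorm hwb b
          simp only [List.length_append, List.length_cons, List.length_nil]
          omega
      · exact ⟨w, hw, [], by rw [wB_nil, mul_one], by simp,
          le_of_not_gt ha, le_of_not_gt hb⟩

end descent

section posT

variable [Fintype ι] [DecidableEq ι]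

variable (hg : ∀ k v, g k v = v - ⟪β k, v⟫ • β k)
  (hnorm : ∀ k, ⟪β k, β k⟫ = 2)
  (hind : LinearIndependent ℝ β)
  (hcartan : ∀ a b : ι, a ≠ b → ⟪β a, β b⟫ = 0 ∨ ⟪β a, β b⟫ = -1)

include hg hnorm

theorem beta_ne_zero (k : ι) : β k ≠ 0 := by
  intro h
  have := hnorm k
  rw [h] at this
  simp at this

theorem pos_beta (k : ι) : Pos β (β k) := ⟨beta_ne_zero hg hnorm k, cone_beta k⟩

include hind hcartan

theorem posT : ∀ m : ℕ, ∀ w ∈ GG g, lenG g w = m →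
    ∀ k : ι, lenG g w ≤ lenG g (w * g k) → Pos β (w (β k)) := by
  intro m
  induction m using Nat.strong_induction_on with
  | _ m IH =>
    intro w hw hlen k hk
    rcases Nat.eq_zero_or_pos m with rfl | hm
    · have hw1 : w = 1 := eq_one_of_lenG_eq_zero (word_of_mem hg hnorm hw) hlen
      rw [hw1, Eone_apply]
      exact pos_beta hg hnorm k
    · obtain ⟨t, ht⟩ := lenG_descent hg hnorm hw (by omega)
      have htk : t ≠ k := by
        rintro rfl
        rw [hlen] at ht hk
        omega
      obtain ⟨y, hy, L, hPw, hQ, hA, hB⟩ := descent hg hnorm k t m w hw hlen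
      have hLne : L ≠ [] := by
        rintro rfl
        rw [wB_nil, mul_one] at hPw
        subst hPw
        rw [hlen] at ht
        omega
      have hyl : lenG g y < m := by
        have : L.length ≥ 1 := by
          cases L with
          | nil => exact absurd rfl hLne
          | cons _ _ => simp
        omega
      have hposk : Pos β (y (β k)) := IH (lenG g y) (by omega) y hy rfl k hA
      have hpost : Pos β (y (β t)) := IH (lenG g y) (by omega) y hy rfl t hB
      have hptk : (⟪β t, β k⟫ : ℝ) = ⟪β k, β t⟫ := real_inner_comm _ _
      -- key facts about applying short words to β k
      have hgt : g t (β k) = β k - ⟪β k, β t⟫ • β t := by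
        rw [hg t (β k), hptk]
      have badcase : ∀ C₂ : List Bool, wB g k t C₂ = wB g k t L * g k →
          C₂.length + 1 = L.length → False := by
        intro C₂ hC₂ hC₂len
        have h1 : w * g k = y * wB g k t C₂ := by
          rw [hPw, mul_assoc, ← hC₂]
        have h2 : lenG g (w * g k) ≤ lenG g y + C₂.length := by
          rw [h1]
          exact lenG_mul_wB_le k t C₂ hy hg hnorm
        rw [hlen] at hk
        omega
      rcases hcartan k t htk.symm with hp | hp
      · -- commuting case
        obtain ⟨C, hCeq, hClen, hCmem⟩ := canon2 hg hnorm k t hp L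
        have hClen' : L.length ≤ C.length := by
          have h1 : w = y * wB g k t C := by rw [hPw, hCeq]
          have h2 : lenG g w ≤ lenG g y + C.length := by
            rw [h1]; exact lenG_mul_wB_le k t C hy hg hnorm
          omega
        have hCL : C.length = L.length := le_antisymm hClen hClen'
        have hgt0 : g t (β k) = β k := by rw [hgt, hp]; simp
        simp only [List.mem_cons, List.not_mem_nil, or_false] at hCmem
        rcases hCmem with rfl | rfl | rfl | rfl
        · -- C = []
          rw [hPw, ← hCeq, wB_nil, mul_one]
          exact hposk
        · -- C = [true] : bad
          exact (badcase [] (by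
            rw [← hCeq, wB_true, wB_nil, g_sq hg hnorm]) (by rw [← hCL]; rfl)).elim
        · -- C = [false]
          rw [hPw, ← hCeq, wB_false, Emul_apply, hgt0]
          exact hposk
        · -- C = [true, false] : bad
          refine (badcase [false] ?_ (by rw [← hCL]; rfl)).elim
          rw [← hCeq]
          have h1 : wB g k t [true, false] = g k * g t := by simp [wB, wprod]
          rw [wB_false, h1, braid2 hg hnorm k t hp, mul_g_g hg hnorm]
      · -- braid case
        obtain ⟨C, hCeq, hClen, hCmem⟩ := canon3 hg hnorm k t hp L
        have hClen' : L.length ≤ C.length := by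
          have h1 : w = y * wB g k t C := by rw [hPw, hCeq]
          have h2 : lenG g w ≤ lenG g y + C.length := by
            rw [h1]; exact lenG_mul_wB_le k t C hy hg hnorm
          omega
        have hCL : C.length = L.length := le_antisymm hClen hClen'
        have hgt1 : g t (β k) = β k + β t := by rw [hgt, hp]; module
        have hgk1 : g k (β t) = β t + β k := by
          rw [hg k (β t), hp]; module
        have hgkk : g k (β k) = -β k := g_self hg hnorm k
        simp only [List.mem_cons, List.not_mem_nil, or_false] at hCmem
        have hab : wB g k t [true, false] = g k * g t := by simp [wB, wprod]
        have hba : wB g k t [false, true] = g t * g k := by simp [wB, wprod]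
        have haba : wB g k t [true, false, true] = g k * g t * g k := by
          simp [wB, wprod, mul_assoc]
        rcases hCmem with rfl | rfl | rfl | rfl | rfl | rfl
        · -- C = []
          rw [hPw, ← hCeq, wB_nil, mul_one]
          exact hposk
        · -- C = [true] : bad
          exact (badcase [] (by
            rw [← hCeq, wB_true, wB_nil, g_sq hg hnorm]) (by rw [← hCL]; rfl)).elim
        · -- C = [false] : w β k = y (β k + β t)
          rw [hPw, ← hCeq, wB_false, Emul_apply, hgt1, map_add]
          exact pos_add hind hposk hpost
        · -- C = [true,false] : w β k = y (β t)
          have hv : (g k * g t) (β k) = β t := by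
            rw [Emul_apply, hgt1, map_add, hgkk, hgk1]
            module
          rw [hPw, ← hCeq, hab, Emul_apply, hv]
          exact hpost
        · -- C = [false,true] : bad
          refine (badcase [false] ?_ (by rw [← hCL]; rfl)).elim
          rw [← hCeq, wB_false, hba, mul_g_g hg hnorm]
        · -- C = [true,false,true] : bad
          refine (badcase [true, false] ?_ (by rw [← hCL]; rfl)).elim
          rw [← hCeq, haba, hab, mul_g_g hg hnorm]

/-- the fundamental dichotomy -/
theorem len_dichotomy (w : Ed d) (hw : w ∈ GG g) (k : ι) :
    (lenG g w ≤ lenG g (w * g k) ∧ Pos β (w (β k))) ∨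
    (lenG g (w * g k) < lenG g w ∧ Pos β (-(w (β k)))) := by
  rcases le_or_gt (lenG g w) (lenG g (w * g k)) with h | h
  · exact Or.inl ⟨h, posT hg hnorm hind hcartan (lenG g w) w hw rfl k h⟩
  · refine Or.inr ⟨h, ?_⟩
    have hwk : w * g k ∈ GG g := mul_mem hw (g_mem k)
    have h2 : lenG g (w * g k) ≤ lenG g ((w * g k) * g k) := by
      rw [mul_g_g hg hnorm]
      omega
    have := posT hg hnorm hind hcartan (lenG g (w * g k)) (w * g k) hwk rfl k h2
    have heq : (w * g k) (β k) = -(w (β k)) := by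
      rw [Emul_apply, g_self hg hnorm, map_neg]
    rwa [heq] at this

theorem neg_of_len_lt {w : Ed d} (hw : w ∈ GG g) {k : ι}
    (h : lenG g (w * g k) < lenG g w) : Pos β (-(w (β k))) := by
  rcases len_dichotomy hg hnorm hind hcartan w hw k with ⟨h1, _⟩ | ⟨_, h2⟩
  · omega
  · exact h2

theorem pos_of_len_le {w : Ed d} (hw : w ∈ GG g) {k : ι}
    (h : lenG g w ≤ lenG g (w * g k)) : Pos β (w (β k)) := by
  rcases len_dichotomy hg hnorm hind hcartan w hw k with ⟨_, h1⟩ | ⟨h2, _⟩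
  · exact h1
  · omega

theorem eq_one_of_all_pos {w : Ed d} (hw : w ∈ GG g)
    (h : ∀ k, Pos β (w (β k))) : w = 1 := by
  by_contra hne
  have hl : lenG g w ≠ 0 := fun h0 =>
    hne (eq_one_of_lenG_eq_zero (word_of_mem hg hnorm hw) h0)
  obtain ⟨t, ht⟩ := lenG_descent hg hnorm hw hl
  have := neg_of_len_lt hg hnorm hind hcartan hw (k := t) (by omega)
  exact pos_neg_absurd hind (h t) this

theorem root_dichotomy {γ : Vd d} (hγ : IsRoot β g γ) : Pos β γ ∨ Pos β (-γ) := by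
  obtain ⟨w, hw, k, rfl⟩ := hγ
  rcases len_dichotomy hg hnorm hind hcartan w hw k with ⟨_, h⟩ | ⟨_, h⟩
  · exact Or.inl h
  · exact Or.inr h

omit hind hcartan in
theorem root_norm {γ : Vd d} (hγ : IsRoot β g γ) : (⟪γ, γ⟫ : ℝ) = 2 := by
  obtain ⟨w, hw, k, rfl⟩ := hγ
  rw [orth hg hnorm hw]
  exact hnorm k

omit hg hnorm hind hcartan in
theorem root_apply {γ : Vd d} (hγ : IsRoot β g γ) {w : Ed d} (hw : w ∈ GG g) :
    IsRoot β g (w γ) := by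
  obtain ⟨u, hu, k, rfl⟩ := hγ
  exact ⟨w * u, mul_mem hw hu, k, rfl⟩

/-- Lemma A : a simple reflection sends positive roots other than its own root
to positive roots. -/
theorem lemmaA {γ : Vd d} (hγ : IsRoot β g γ) (hpos : Pos β γ) (k : ι)
    (hne : γ ≠ β k) : Pos β (g k γ) := by
  obtain ⟨hnz, c, hc, hrep⟩ := hpos
  by_cases hsupp : ∀ m, m ≠ k → c m = 0
  · -- γ = c k • β k, norm forces c k = 1, contradiction
    exfalso
    have hγk : γ = c k • β k := by
      rw [hrep]
      exact Finset.sum_eq_single k (fun m _ hm => by rw [hsupp m hm, zero_smul])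
        (fun hk => absurd (Finset.mem_univ k) hk)
    have h2 : (⟪γ, γ⟫ : ℝ) = 2 := root_norm hg hnorm hγ
    rw [hγk] at h2
    rw [real_inner_smul_left, real_inner_smul_right, hnorm k] at h2
    have hck : c k = 1 ∨ c k = -1 := by
      have : c k * c k = 1 := by linarith
      rcases mul_self_eq_one_iff.mp this with h | h
      · exact Or.inl h
      · exact Or.inr h
    rcases hck with h | h
    · exact hne (by rw [hγk, h, one_smul])
    · have := hc k; rw [h] at this; linarith
  · push_neg at hsupp
    obtain ⟨m, hmk, hcm⟩ := hsupp
    have hcm' : 0 < c m := lt_of_le_of_ne (hc m) (Ne.symm hcm)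
    -- g k γ is a root
    have hroot : IsRoot β g (g k γ) := root_apply (g := g) hγ (g_mem k)
    rcases root_dichotomy hg hnorm hind hcartan hroot with h | h
    · exact h
    · -- impossible : coordinate m of g k γ is c m > 0 but all coords ≤ 0
      exfalso
      obtain ⟨hnz', c', hc', hrep'⟩ := h
      have hgkγ : (∑ l, (fun l => c l - (if l = k then ⟪β k, γ⟫ else 0)) l • β l)
          = ∑ l, (fun l => -c' l) l • β l := by
        have e1 : ∑ l, (fun l => c l - (if l = k then ⟪β k, γ⟫ else 0)) l • β l = g k γ := by
          simp only
          rw [Finset.sum_congr rfl (fun l _ => sub_smul (c l) _ (β l)),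
            Finset.sum_sub_distrib, hg k γ, ← hrep]
          congr 1
          rw [Finset.sum_eq_single k (fun l _ hl => by simp [hl])
            (fun hk => absurd (Finset.mem_univ k) hk)]
          simp
        have e2 : ∑ l, (fun l => -c' l) l • β l = g k γ := by
          simp only
          rw [show g k γ = -(-(g k γ)) from (neg_neg _).symm, hrep', ← Finset.sum_neg_distrib]
          exact (Finset.sum_congr rfl fun l _ => by simp).symm
        rw [e1, e2]
      have := repr_unique hind hgkγ
      have hm := congrFun this m
      simp only [if_neg hmk, sub_zero] at hm
      have h5 := hc' m
      rw [hm] at hcm'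
      linarith

end posT

section reflect

variable [Fintype ι] [DecidableEq ι]

variable (hg : ∀ k v, g k v = v - ⟪β k, v⟫ • β k)
  (hnorm : ∀ k, ⟪β k, β k⟫ = 2)
  (hind : LinearIndependent ℝ β)
  (hcartan : ∀ a b : ι, a ≠ b → ⟪β a, β b⟫ = 0 ∨ ⟪β a, β b⟫ = -1)

include hg hnorm hind hcartan

theorem reflect_drop {γ : Vd d} (hγ : IsRoot β g γ) (hpos : Pos β γ)
    {f : Ed d} (hf : ∀ v, f v = v - ⟪γ, v⟫ • γ) :
    ∀ L : List ι, Pos β (-(wprod g L γ)) →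
      ∃ L' : List ι, L'.length + 1 = L.length ∧ wprod g L * f = wprod g L' := by
  intro L
  induction L with
  | nil =>
    intro hneg
    rw [wprod_nil, Eone_apply] at hneg
    exact (pos_neg_absurd hind hpos hneg).elim
  | cons a L ih =>
    intro hneg
    have hLγ : IsRoot β g (wprod g L γ) := root_apply (g := g) hγ (wprod_mem L)
    rcases root_dichotomy hg hnorm hind hcartan hLγ with hp | hn
    · by_cases heq : wprod g L γ = β a
      · have hinvγ : (wprod g L)⁻¹ (β a) = γ := by
          rw [← heq, Einv_apply, LinearEquiv.symm_apply_apply]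
        have hfe : f = (wprod g L)⁻¹ * g a * ((wprod g L)⁻¹)⁻¹ := by
          refine LinearEquiv.ext fun v => ?_
          rw [hf, conj_formula hg hnorm (inv_mem (wprod_mem L)) (hg a) v, hinvγ]
        refine ⟨L, by simp, ?_⟩
        rw [hfe, inv_inv, wprod_cons]
        have h2 : g a * wprod g L * ((wprod g L)⁻¹ * g a * wprod g L)
            = (g a * g a) * wprod g L := by group
        rw [h2, g_sq hg hnorm, one_mul]
      · exfalso
        have hP := lemmaA hg hnorm hind hcartan hLγ hp a heq
        rw [← Emul_apply, ← wprod_cons] at hP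
        exact pos_neg_absurd hind hP hneg
    · obtain ⟨L', hlen, hmul⟩ := ih hn
      refine ⟨a :: L', by simp [← hlen], ?_⟩
      rw [wprod_cons, mul_assoc, hmul, wprod_cons]

theorem len_lt_of_reflect {w : Ed d} (hw : w ∈ GG g) {γ : Vd d}
    (hγ : IsRoot β g γ) (hpos : Pos β γ) {f : Ed d}
    (hf : ∀ v, f v = v - ⟪γ, v⟫ • γ) (hneg : Pos β (-(w γ))) :
    lenG g (w * f) < lenG g w := by
  obtain ⟨L, hL, hw2⟩ := lenG_spec (word_of_mem hg hnorm hw)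
  rw [hw2] at hneg
  obtain ⟨L', hlen, hmul⟩ := reflect_drop hg hnorm hind hcartan hγ hpos hf L hneg
  have h1 : lenG g (w * f) ≤ L'.length := by
    rw [hw2, hmul]
    exact lenG_le rfl
  omega

end reflect


section main

variable {n : ℕ} {α : Fin n → Vd d} {r : Fin n → Ed d}

variable (hind : LinearIndependent ℝ α)
  (hnorm : ∀ i, ⟪α i, α i⟫ = 2)
  (hcartan : ∀ i j, i ≠ j → ⟪α i, α j⟫ = 0 ∨ ⟪α i, α j⟫ = -1)
  (hr : ∀ i v, r i v = v - ⟪α i, v⟫ • α i)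

include hr hnorm

theorem conj_iff {w : Ed d} (hw : w ∈ GG r) (i j : Fin n) :
    w * r j * w⁻¹ = r i ↔ (w (α j) = α i ∨ w (α j) = -α i) := by
  constructor
  · intro h
    have hcf := conj_formula hr hnorm hw (hr j)
    have happ := hcf (w (α j))
    rw [h, hr i (w (α j))] at happ
    have h2 : (⟪w (α j), w (α j)⟫ : ℝ) = 2 := by rw [orth hr hnorm hw]; exact hnorm j
    rw [h2] at happ
    -- happ : w αj - ⟪α i, w αj⟫ • α i = w αj - 2 • w αj
    set c : ℝ := ⟪α i, w (α j)⟫ with hc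
    have h3 : w (α j) = (c / 2) • α i := by
      have : (2 : ℝ) • w (α j) = c • α i := by
        linear_combination (norm := module) happ
      calc w (α j) = (2⁻¹ : ℝ) • ((2 : ℝ) • w (α j)) := by
            rw [smul_smul]; norm_num
      _ = (2⁻¹ : ℝ) • (c • α i) := by rw [this]
      _ = (c / 2) • α i := by rw [smul_smul]; ring_nf
    have h4 : (c / 2) * (c / 2) = 1 := by
      have h5 : (⟪w (α j), w (α j)⟫ : ℝ) = (c/2) * ((c/2) * 2) := by
        rw [h3, real_inner_smul_left, real_inner_smul_right, hnorm i]
      rw [h2] at h5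
      linarith
    rcases mul_self_eq_one_iff.mp h4 with h6 | h6
    · left; rw [h3, h6, one_smul]
    · right; rw [h3, h6]; module
  · intro h
    have hcf := conj_formula hr hnorm hw (hr j)
    refine LinearEquiv.ext fun v => ?_
    rw [hcf v, hr i v]
    rcases h with h | h
    · rw [h]
    · rw [h, inner_neg_left]
      module

theorem exists_conj_aux : ∀ (p : List (Fin n)) (i j : Fin n), p ≠ [] →
    p.head? = some i → p.getLast? = some j →
    p.Chain' (fun a b => ⟪α a, α b⟫ = -1) → ∃ w ∈ GG r, w (α j) = α i := by
  intro p
  induction p with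
  | nil => intro i j h; exact absurd rfl h
  | cons x rest ih =>
    intro i j _ hhead hlast hchain
    have hx : x = i := by simpa using hhead
    subst hx
    cases rest with
    | nil =>
      have : j = x := by simpa using hlast.symm
      subst this
      exact ⟨1, one_mem _, rfl⟩
    | cons y rest2 =>
      simp only [List.Chain', List.isChain_cons_cons] at hchain
      obtain ⟨hxy, hchain2⟩ := hchain
      have hlast2 : (y :: rest2).getLast? = some j := by
        rwa [List.getLast?_cons_cons] at hlast
      obtain ⟨w', hw', hw'j⟩ := ih y j (by simp) (by simp) hlast2 hchain2
      have hyx : (⟪α y, α x⟫ : ℝ) = -1 := by rw [real_inner_comm]; exact hxy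
      refine ⟨(r y * r x) * w', mul_mem (mul_mem (g_mem y) (g_mem x)) hw', ?_⟩
      have h1 : r x (α y) = α y + α x := by rw [hr x (α y), hxy]; module
      have h2 : r y (α y + α x) = α x := by
        rw [map_add, g_self hr hnorm y, hr y (α x), hyx]
        module
      rw [Emul_apply, hw'j, Emul_apply, h1, h2]

omit hr hnorm in
include hind in
theorem exists_dd : ∃ dd : Vd d, ∀ k, ⟪α k, dd⟫ = 1 := by
  classical
  let T : Vd d →ₗ[ℝ] (Fin n → ℝ) :=
    { toFun := fun v k => ⟪α k, v⟫
      map_add' := fun u v => by funext k; simp [inner_add_right]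
      map_smul' := fun c v => by funext k; simp [inner_smul_right] }
  let S := Submodule.span ℝ (Set.range α)
  have hinj : Function.Injective (T.comp S.subtype) := by
    rw [← LinearMap.ker_eq_bot, LinearMap.ker_eq_bot']
    rintro ⟨v, hv⟩ h0
    have hz : ∀ k, (⟪α k, v⟫ : ℝ) = 0 := by
      intro k
      have := congrFun (congrArg (fun f => f) h0) k
      simpa [T] using congrFun h0 k
    have hvz : ∀ x ∈ S, (⟪x, v⟫ : ℝ) = 0 := by
      intro x hx
      induction hx using Submodule.span_induction with
      | mem x hxm => obtain ⟨k, rfl⟩ := hxm; exact hz k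
      | zero => simp
      | add a b _ _ ha hb => rw [inner_add_left, ha, hb]; ring
      | smul c a _ ha => rw [real_inner_smul_left, ha]; ring
    have : (⟪v, v⟫ : ℝ) = 0 := hvz v hv
    have hv0 : v = 0 := by
      have := inner_self_eq_zero (𝕜 := ℝ).mp this
      exact this
    exact Subtype.ext hv0
  have hfr : Module.finrank ℝ ↥S = n := by
    rw [finrank_span_eq_card hind]
    simp
  have hrange : LinearMap.range (T.comp S.subtype) = ⊤ := by
    apply Submodule.eq_top_of_finrank_eq
    rw [LinearMap.finrank_range_of_inj hinj, hfr]
    simp [Module.finrank_fintype_fun_eq_card]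
  have hmem : (fun _ => (1 : ℝ)) ∈ LinearMap.range (T.comp S.subtype) := by
    rw [hrange]; trivial
  obtain ⟨v, hv⟩ := hmem
  exact ⟨v.1, fun k => by simpa [T] using congrFun hv k⟩

include hind in
theorem exists_dominant (hfin : Finite (GG r : Subgroup (Ed d))) (x : Vd d) :
    ∃ G₀ ∈ GG r, ∀ k, 0 ≤ ⟪α k, G₀ x⟫ := by
  obtain ⟨dd, hdd⟩ := exists_dd hind
  haveI : Nonempty (GG r : Subgroup (Ed d)) := ⟨1⟩
  obtain ⟨w₀, hw₀⟩ := Finite.exists_max (fun w : (GG r : Subgroup (Ed d)) =>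
    (⟪(w : Ed d) x, dd⟫ : ℝ))
  refine ⟨(w₀ : Ed d), w₀.2, fun k => ?_⟩
  by_contra hneg
  push_neg at hneg
  set x' := (w₀ : Ed d) x with hx'
  have hmem : r k * (w₀ : Ed d) ∈ GG r := mul_mem (g_mem k) w₀.2
  have := hw₀ ⟨r k * (w₀ : Ed d), hmem⟩
  simp only [Subgroup.coe_mk] at this
  rw [Emul_apply] at this
  rw [hr k x'] at this
  rw [inner_sub_left, real_inner_smul_left, hdd k] at this
  simp only [mul_one] at this
  -- this : ⟪x', dd⟫ - ⟪α k, x'⟫ ≤ ⟪x', dd⟫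
  linarith


include hind hcartan

theorem steinberg (x' : Vd d) (hdom : ∀ k, 0 ≤ (⟪α k, x'⟫ : ℝ)) :
    ∀ m : ℕ, ∀ h ∈ GG r, lenG r h = m → h x' = x' →
      h ∈ GG (fun k : {k : Fin n // (⟪α k, x'⟫ : ℝ) = 0} => r k.1) := by
  intro m
  induction m using Nat.strong_induction_on with
  | _ m IH =>
    intro h hh hlen hfix
    rcases Nat.eq_zero_or_pos m with rfl | hm
    · rw [eq_one_of_lenG_eq_zero (word_of_mem hr hnorm hh) hlen]
      exact one_mem _
    · obtain ⟨t, ht⟩ := lenG_descent hr hnorm hh (by omega)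
      have hneg : Pos α (-(h (α t))) :=
        neg_of_len_lt hr hnorm hind hcartan hh (k := t) (by omega)
      have c1 : (⟪h (α t), x'⟫ : ℝ) = ⟪α t, x'⟫ := by
        conv_lhs => rw [← hfix]
        exact orth hr hnorm hh (α t) x'
      obtain ⟨_, c, hc, hrep⟩ := hneg
      have c2 : (0:ℝ) ≤ ⟪-(h (α t)), x'⟫ := by
        rw [hrep, sum_inner]
        apply Finset.sum_nonneg
        intro k _
        rw [real_inner_smul_left]
        exact mul_nonneg (hc k) (hdom k)
      have c3 : (⟪α t, x'⟫ : ℝ) = 0 := by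
        rw [inner_neg_left] at c2
        have h4 := hdom t
        linarith [c1]
      have hrt : r t x' = x' := by
        rw [hr t x', c3]
        simp
      have hfix2 : (h * r t) x' = x' := by rw [Emul_apply, hrt, hfix]
      have hmem2 := IH (lenG r (h * r t)) (by omega) (h * r t)
        (mul_mem hh (g_mem t)) rfl hfix2
      rw [show h = (h * r t) * r t from (mul_g_g hr hnorm h t).symm]
      exact mul_mem hmem2 (Subgroup.subset_closure ⟨⟨t, c3⟩, rfl⟩)

omit hind hcartan in
theorem GJ_fixes (x' : Vd d) :
    ∀ h ∈ GG (fun k : {k : Fin n // (⟪α k, x'⟫ : ℝ) = 0} => r k.1), h x' = x' := by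
  intro h hh
  induction hh using Subgroup.closure_induction with
  | mem u hu =>
    obtain ⟨k, rfl⟩ := hu
    rw [hr k.1 x', k.2]
    simp
  | one => rfl
  | mul u v _ _ ihu ihv => rw [Emul_apply, ihv, ihu]
  | inv u _ ihu => conv_lhs => rw [← ihu, ← Emul_apply, inv_mul_cancel, Eone_apply]

theorem stab_one (hfin : Finite (GG r : Subgroup (Ed d))) (j : Fin n)
    {h : Ed d} (hh : h ∈ GG r) (hfixj : h (α j) = α j)
    (hperp : ∀ γ, IsRoot α r γ → Pos α γ → (⟪γ, α j⟫ : ℝ) = 0 → Pos α (h γ)) :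
    h = 1 := by
  classical
  obtain ⟨G₀, hG₀, hdom⟩ := exists_dominant hind hnorm hr hfin (α j)
  set x' := G₀ (α j) with hx'def
  haveI : Fintype {k : Fin n // (⟪α k, x'⟫ : ℝ) = 0} := Fintype.ofFinite _
  set βJ : {k : Fin n // (⟪α k, x'⟫ : ℝ) = 0} → Vd d := fun k => α k.1 with hβJ
  set gJ : {k : Fin n // (⟪α k, x'⟫ : ℝ) = 0} → Ed d := fun k => r k.1 with hgJdef
  have hgJ : ∀ k v, gJ k v = v - ⟪βJ k, v⟫ • βJ k := fun k v => hr k.1 v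
  have hnormJ : ∀ k, (⟪βJ k, βJ k⟫ : ℝ) = 2 := fun k => hnorm k.1
  have hcartanJ : ∀ a b, a ≠ b → (⟪βJ a, βJ b⟫ : ℝ) = 0 ∨ (⟪βJ a, βJ b⟫ : ℝ) = -1 :=
    fun a b hab => hcartan a.1 b.1 (fun e => hab (Subtype.ext e))
  have hindJ : LinearIndependent ℝ βJ := hind.comp Subtype.val Subtype.val_injective
  have hJle : GG gJ ≤ GG r := by
    rw [GG, Subgroup.closure_le]
    rintro _ ⟨k, rfl⟩
    exact g_mem k.1
  -- minimal length coset representative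
  have hQne : {m | ∃ u ∈ GG gJ, m = lenG r (G₀⁻¹ * u)}.Nonempty :=
    ⟨lenG r (G₀⁻¹ * 1), 1, one_mem _, rfl⟩
  obtain ⟨h₀, hh₀, hh₀eq⟩ := Nat.sInf_mem hQne
  set q := G₀⁻¹ * h₀ with hqdef
  have hq : q ∈ GG r := mul_mem (inv_mem hG₀) (hJle hh₀)
  have hqmin : ∀ u ∈ GG gJ, lenG r q ≤ lenG r (G₀⁻¹ * u) := by
    intro u hu
    rw [hqdef, ← hh₀eq]
    exact Nat.sInf_le ⟨u, hu, rfl⟩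
  have hqpos : ∀ k : {k : Fin n // (⟪α k, x'⟫ : ℝ) = 0}, Pos α (q (α k.1)) := by
    intro k
    apply pos_of_len_le hr hnorm hind hcartan hq
    have : q * r k.1 = G₀⁻¹ * (h₀ * r k.1) := by rw [hqdef, mul_assoc]
    rw [this]
    exact hqmin (h₀ * r k.1) (mul_mem hh₀ (Subgroup.subset_closure ⟨k, rfl⟩))
  have hqx : q x' = α j := by
    have h1 : h₀ x' = x' := GJ_fixes hnorm hr x' h₀ hh₀
    rw [hqdef, Emul_apply, h1, hx'def, ← Emul_apply, inv_mul_cancel, Eone_apply]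
  have hqinvj : q⁻¹ (α j) = x' := by
    rw [← hqx, Einv_apply, LinearEquiv.symm_apply_apply]
  set h' := q⁻¹ * h * q with hh'def
  have hh' : h' ∈ GG r := mul_mem (mul_mem (inv_mem hq) hh) hq
  have hfix' : h' x' = x' := by
    rw [hh'def, Emul_apply, Emul_apply, hqx, hfixj, ← hqinvj, Einv_apply]
  have hh'J : h' ∈ GG gJ :=
    steinberg hind hnorm hcartan hr x' hdom (lenG r h') h' hh' rfl hfix'
  by_contra hne
  have hne' : h' ≠ 1 := by
    intro e
    apply hne
    have : h = q * h' * q⁻¹ := by rw [hh'def]; group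
    rw [this, e, mul_one, mul_inv_cancel]
  have hnall : ¬ ∀ k, Pos βJ (h' (βJ k)) := fun hall =>
    hne' (eq_one_of_all_pos hgJ hnormJ hindJ hcartanJ hh'J hall)
  push_neg at hnall
  obtain ⟨k, hk⟩ := hnall
  have hnegJ : Pos βJ (-(h' (βJ k))) := by
    rcases len_dichotomy hgJ hnormJ hindJ hcartanJ h' hh'J k with ⟨_, hp⟩ | ⟨_, hp⟩
    · exact absurd hp hk
    · exact hp
  set δ := q (α k.1) with hδdef
  have hδroot : IsRoot α r δ := ⟨q, hq, k.1, rfl⟩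
  have hδpos : Pos α δ := hqpos k
  have hδperp : (⟪δ, α j⟫ : ℝ) = 0 := by
    rw [hδdef, ← hqx, orth hr hnorm hq]
    exact k.2
  have hcomm : h δ = q (h' (α k.1)) := by
    rw [hδdef, ← Emul_apply, ← Emul_apply, hh'def]
    have : h * q = q * (q⁻¹ * h * q) := by group
    rw [← this]
  have hPneg : Pos α (-(h δ)) := by
    obtain ⟨hnz, c, hc, hrep⟩ := hnegJ
    have hrep2 : -(h δ) = ∑ k', c k' • q (α k'.1) := by
      rw [hcomm, ← map_neg]
      rw [show -(h' (α k.1)) = -(h' (βJ k)) from rfl, hrep, map_sum]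
      exact Finset.sum_congr rfl fun k' _ => by rw [map_smul]
    refine ⟨?_, ?_⟩
    · rw [hcomm, ← map_neg]
      intro e
      apply hnz
      have := q.map_eq_zero_iff.mp e
      rwa [show -(h' (α k.1)) = -(h' (βJ k)) from rfl] at this
    · rw [hrep2]
      exact cone_sum Finset.univ c _ (fun m _ => hc m) (fun m _ => (hqpos m).2)
  exact pos_neg_absurd hind (hperp δ hδroot hδpos hδperp) hPneg


omit hind hcartan in
theorem root_neg {γ : Vd d} (hγ : IsRoot α r γ) : IsRoot α r (-γ) := by
  obtain ⟨u, hu, k, rfl⟩ := hγ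
  exact ⟨u * r k, mul_mem hu (g_mem k), k, by
    rw [Emul_apply, g_self hr hnorm k, map_neg]⟩

include hind hcartan

theorem min_perp (i j : Fin n) {w : Ed d} (hw : w ∈ GG r)
    (hconj : w * r j * w⁻¹ = r i)
    (hmin : ∀ v ∈ GG r, v * r j * v⁻¹ = r i → lenG r w ≤ lenG r v) :
    (∀ γ, IsRoot α r γ → Pos α γ → (γ = α j ∨ (⟪γ, α j⟫ : ℝ) = 0) → Pos α (w γ)) ∧
      w (α j) = α i := by
  classical
  have hmain : ∀ γ, IsRoot α r γ → Pos α γ → (γ = α j ∨ (⟪γ, α j⟫ : ℝ) = 0) →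
      Pos α (w γ) := by
    intro γ hγ hγpos hcond
    have hwγroot : IsRoot α r (w γ) := root_apply (g := r) hγ hw
    rcases root_dichotomy hr hnorm hind hcartan hwγroot with hp | hn
    · exact hp
    · exfalso
      obtain ⟨u, hu, kγ, hγeq⟩ := hγ
      set sγ := u * r kγ * u⁻¹ with hsγdef
      have hsγmem : sγ ∈ GG r := mul_mem (mul_mem hu (g_mem kγ)) (inv_mem hu)
      have hsγf : ∀ v, sγ v = v - ⟪γ, v⟫ • γ := by
        intro v
        rw [hsγdef, hγeq]
        exact conj_formula hr hnorm hu (hr kγ) v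
      have hγroot : IsRoot α r γ := ⟨u, hu, kγ, hγeq⟩
      have hlt : lenG r (w * sγ) < lenG r w :=
        len_lt_of_reflect hr hnorm hind hcartan hw hγroot hγpos hsγf hn
      have hsγj : sγ * r j * sγ⁻¹ = r j := by
        have hform := conj_formula hr hnorm hsγmem (hr j)
        refine LinearEquiv.ext fun v => ?_
        rw [hform v, hr j v]
        rcases hcond with hc | hc
        · have hsj : sγ (α j) = -(α j) := by
            rw [hsγf (α j), ← hc, root_norm hr hnorm hγroot]
            module
          rw [hsj, inner_neg_left]
          module
        · have hsj : sγ (α j) = α j := by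
            rw [hsγf (α j), hc]
            simp
          rw [hsj]
      have hconj2 : (w * sγ) * r j * (w * sγ)⁻¹ = r i := by
        have he : (w * sγ) * r j * (w * sγ)⁻¹ = w * (sγ * r j * sγ⁻¹) * w⁻¹ := by group
        rw [he, hsγj, hconj]
      have := hmin (w * sγ) (mul_mem hw hsγmem) hconj2
      omega
  refine ⟨hmain, ?_⟩
  rcases (conj_iff hnorm hr hw i j).mp hconj with h | h
  · exact h
  · exfalso
    have h1 : Pos α (w (α j)) :=
      hmain (α j) ⟨1, one_mem _, j, rfl⟩ (pos_beta hr hnorm j) (Or.inl rfl)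
    rw [h] at h1
    exact pos_neg_absurd hind (pos_beta hr hnorm i) h1

theorem unique_min (hfin : Finite (GG r : Subgroup (Ed d))) (i j : Fin n)
    {w w' : Ed d} (hw : w ∈ GG r) (hw' : w' ∈ GG r)
    (hconj : w * r j * w⁻¹ = r i) (hconj' : w' * r j * w'⁻¹ = r i)
    (hmin : ∀ v ∈ GG r, v * r j * v⁻¹ = r i → lenG r w ≤ lenG r v)
    (hmin' : ∀ v ∈ GG r, v * r j * v⁻¹ = r i → lenG r w' ≤ lenG r v) :
    w = w' := by
  obtain ⟨hwperp, hwj⟩ := min_perp hind hnorm hcartan hr i j hw hconj hmin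
  obtain ⟨hw'perp, hw'j⟩ := min_perp hind hnorm hcartan hr i j hw' hconj' hmin'
  set h := w⁻¹ * w' with hhdef
  have hmem : h ∈ GG r := mul_mem (inv_mem hw) hw'
  have hwinv : w⁻¹ (α i) = α j := by
    rw [← hwj, Einv_apply, LinearEquiv.symm_apply_apply]
  have hfixj : h (α j) = α j := by
    rw [hhdef, Emul_apply, hw'j, hwinv]
  have hperp : ∀ γ, IsRoot α r γ → Pos α γ → (⟪γ, α j⟫ : ℝ) = 0 → Pos α (h γ) := by
    intro γ hγ hγpos hγperp
    have hhγroot : IsRoot α r (h γ) := root_apply (g := r) hγ hmem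
    rcases root_dichotomy hr hnorm hind hcartan hhγroot with hp | hn
    · exact hp
    · exfalso
      have hδroot : IsRoot α r (-(h γ)) := root_neg hnorm hr hhγroot
      have hδperp : (⟪-(h γ), α j⟫ : ℝ) = 0 := by
        rw [inner_neg_left, ← hfixj, orth hr hnorm hmem, hγperp, neg_zero]
      have hPwδ : Pos α (w (-(h γ))) := hwperp (-(h γ)) hδroot hn (Or.inr hδperp)
      have hkey : w (h γ) = w' γ := by
        rw [← Emul_apply, hhdef]
        have : w * (w⁻¹ * w') = w' := by group
        rw [this]
      rw [map_neg, hkey] at hPwδ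
      exact pos_neg_absurd hind (hw'perp γ hγ hγpos (Or.inr hγperp)) hPwδ
  have h1 := stab_one hind hnorm hcartan hr hfin j hmem hfixj hperp
  rw [hhdef] at h1
  exact (inv_mul_eq_one.mp h1).symm ▸ rfl

end main

end WeylDev

/-- In a finite simply laced Weyl group of connected type, for any two nodes `i, j`
there is a unique element `w_{ji}` of minimal length with `w_{ji} r_j w_{ji}⁻¹ = r_i`,
and it satisfies `w_{ij}⁻¹ = w_{ji}`. -/
theorem weyl_unique_min_conjugator (n d : ℕ)
    (α : Fin n → EuclideanSpace ℝ (Fin d))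
    (hind : LinearIndependent ℝ α)
    (hnorm : ∀ i, ⟪α i, α i⟫ = 2)
    (hcartan : ∀ i j, i ≠ j → ⟪α i, α j⟫ = 0 ∨ ⟪α i, α j⟫ = -1)
    (hconn : ∀ i j : Fin n, ∃ p : List (Fin n), p ≠ [] ∧ p.head? = some i ∧
      p.getLast? = some j ∧ p.Chain' (fun a b => ⟪α a, α b⟫ = -1))
    (r : Fin n → (EuclideanSpace ℝ (Fin d) ≃ₗ[ℝ] EuclideanSpace ℝ (Fin d)))
    (hr : ∀ i v, r i v = v - ⟪α i, v⟫ • α i)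
    (W : Subgroup (EuclideanSpace ℝ (Fin d) ≃ₗ[ℝ] EuclideanSpace ℝ (Fin d)))
    (hW : W = Subgroup.closure (Set.range r))
    (hfin : Finite W)
    (ℓ : W → ℕ)
    (hℓ : ∀ w : W, ℓ w = sInf {k | ∃ ω : List (Fin n),
      ω.length = k ∧ w.1 = (ω.map r).prod})
    (i j : Fin n) :
    (∃! w : W, (w.1 * r j * w.1⁻¹ = r i ∧
       ∀ v : W, v.1 * r j * v.1⁻¹ = r i → ℓ w ≤ ℓ v)) ∧
    (∀ w v : W,
      (w.1 * r j * w.1⁻¹ = r i ∧ ∀ u : W, u.1 * r j * u.1⁻¹ = r i → ℓ w ≤ ℓ u) →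
      (v.1 * r i * v.1⁻¹ = r j ∧ ∀ u : W, u.1 * r i * u.1⁻¹ = r j → ℓ v ≤ ℓ u) →
      w⁻¹ = v) := by
  subst hW
  have hWG : (Subgroup.closure (Set.range r)) = WeylDev.GG r := rfl
  have hfin' : Finite (WeylDev.GG r : Subgroup (WeylDev.Ed d)) := hfin
  have hℓeq : ∀ w : ↥(Subgroup.closure (Set.range r)), ℓ w = WeylDev.lenG r w.1 := by
    intro w
    rw [hℓ w]
    rfl
  -- general uniqueness, in subgroup-element terms, for arbitrary nodes a b
  have huniq : ∀ (a b : Fin n) (w w' : ↥(Subgroup.closure (Set.range r))),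
      w.1 * r b * w.1⁻¹ = r a → w'.1 * r b * w'.1⁻¹ = r a →
      (∀ u : ↥(Subgroup.closure (Set.range r)), u.1 * r b * u.1⁻¹ = r a → ℓ w ≤ ℓ u) →
      (∀ u : ↥(Subgroup.closure (Set.range r)), u.1 * r b * u.1⁻¹ = r a → ℓ w' ≤ ℓ u) →
      w = w' := by
    intro a b w w' hc hc' hm hm'
    have hmin : ∀ v ∈ WeylDev.GG r, v * r b * v⁻¹ = r a →
        WeylDev.lenG r w.1 ≤ WeylDev.lenG r v := by
      intro v hv hcv
      have := hm ⟨v, hv⟩ hcv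
      rwa [hℓeq, hℓeq] at this
    have hmin' : ∀ v ∈ WeylDev.GG r, v * r b * v⁻¹ = r a →
        WeylDev.lenG r w'.1 ≤ WeylDev.lenG r v := by
      intro v hv hcv
      have := hm' ⟨v, hv⟩ hcv
      rwa [hℓeq, hℓeq] at this
    exact Subtype.ext (WeylDev.unique_min hind hnorm hcartan hr hfin' a b w.2 w'.2
      hc hc' hmin hmin')
  -- existence of a conjugator for arbitrary nodes a b
  have hex : ∀ a b : Fin n, ∃ w : ↥(Subgroup.closure (Set.range r)),
      w.1 * r b * w.1⁻¹ = r a := by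
    intro a b
    obtain ⟨p, hpne, hph, hpl, hpc⟩ := hconn a b
    obtain ⟨w, hwmem, hwab⟩ := WeylDev.exists_conj_aux hnorm hr p a b hpne hph hpl hpc
    exact ⟨⟨w, hwmem⟩, (WeylDev.conj_iff hnorm hr hwmem a b).mpr (Or.inl hwab)⟩
  -- existence of a minimal conjugator for arbitrary nodes a b
  have hexmin : ∀ a b : Fin n, ∃ w : ↥(Subgroup.closure (Set.range r)),
      w.1 * r b * w.1⁻¹ = r a ∧
      ∀ v : ↥(Subgroup.closure (Set.range r)), v.1 * r b * v.1⁻¹ = r a → ℓ w ≤ ℓ v := by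
    intro a b
    obtain ⟨w₀, hw₀⟩ := hex a b
    have hMne : {m | ∃ v : ↥(Subgroup.closure (Set.range r)),
        v.1 * r b * v.1⁻¹ = r a ∧ ℓ v = m}.Nonempty := ⟨ℓ w₀, w₀, hw₀, rfl⟩
    obtain ⟨wm, hwmc, hwml⟩ := Nat.sInf_mem hMne
    refine ⟨wm, hwmc, fun v hv => ?_⟩
    rw [hwml]
    exact Nat.sInf_le ⟨v, hv, rfl⟩
  constructor
  · obtain ⟨wm, hwmc, hwmm⟩ := hexmin i j
    refine ⟨wm, ⟨hwmc, hwmm⟩, ?_⟩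
    intro y ⟨hyc, hym⟩
    exact huniq i j y wm hyc hwmc hym hwmm
  · intro w v ⟨hwc, hwm⟩ ⟨hvc, hvm⟩
    -- w⁻¹ conjugates r i to r j and is minimal for that problem
    have hwinvc : (w⁻¹ : ↥(Subgroup.closure (Set.range r))).1 * r i * (w⁻¹ :
        ↥(Subgroup.closure (Set.range r))).1⁻¹ = r j := by
      have h1 : (w⁻¹ : ↥(Subgroup.closure (Set.range r))).1 = w.1⁻¹ := rfl
      rw [h1, ← hwc]
      group
    have hwinvm : ∀ u : ↥(Subgroup.closure (Set.range r)),
        u.1 * r i * u.1⁻¹ = r j → ℓ w⁻¹ ≤ ℓ u := by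
      intro u huc
      -- u⁻¹ conjugates r j to r i
      have huinvc : (u⁻¹ : ↥(Subgroup.closure (Set.range r))).1 * r j * (u⁻¹ :
          ↥(Subgroup.closure (Set.range r))).1⁻¹ = r i := by
        have h1 : (u⁻¹ : ↥(Subgroup.closure (Set.range r))).1 = u.1⁻¹ := rfl
        rw [h1, ← huc]
        group
      have h2 := hwm u⁻¹ huinvc
      have h3 : ℓ w⁻¹ = ℓ w := by
        rw [hℓeq, hℓeq]
        exact WeylDev.lenG_inv hr hnorm w.2
      have h4 : ℓ u⁻¹ = ℓ u := by
        rw [hℓeq, hℓeq]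
        exact WeylDev.lenG_inv hr hnorm u.2
      rw [h3]
      rw [h4] at h2
      exact h2
    exact huniq j i w⁻¹ v hwinvc hvc hwinvm hvm
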